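/- arXiv:math/0307070 — 2 statements merged into one kernel-verified Lean document; each statement's English description precedes it below -/
import Mathlib

section
/- Let n ≥ 3 and let F be a closed subset of ℝ^n with Hausdorff dimension strictly less than n − 1. Then ℝ^n \ F is path-connected. -/
open MeasureTheory Set

section aux

variable {m : ℕ}

local notation "E" => EuclideanSpace ℝ (Fin (m + 1))

/-- The projection set bound: the set of points `z` with `z 0 = R` such that the segment
`[x, z]` meets `F` is contained in the image of `F ∩ {p | x 0 < p 0}` under the central
projection from `x` onto the hyperplane `{z | z 0 = R}`. -/
lemma aux_dimH_shadow (x : E) (F : Set E) (hx : x ∉ F) (R : ℝ) (hR : x 0 < R) :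
    dimH {z : E | z 0 = R ∧ (segment ℝ x z ∩ F).Nonempty} ≤ dimH F := by
  set f : E → E := fun p => x + ((R - x 0) * (p 0 - x 0)⁻¹) • (p - x) with hf
  set s : Set E := {p | x 0 < p 0} with hs
  have hconv : Convex ℝ s := by
    have : IsLinearMap ℝ (fun p : E => p 0) :=
      (EuclideanSpace.projₗ (𝕜 := ℝ) (0 : Fin (m + 1))).isLinear
    exact convex_halfSpace_gt this (x 0)
  have hsmooth : ContDiffOn ℝ 1 f s := by
    have h0 : ContDiff ℝ 1 (fun p : E => p 0) :=
      (EuclideanSpace.proj (𝕜 := ℝ) (0 : Fin (m + 1))).contDiff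
    have hinv : ContDiffOn ℝ 1 (fun p : E => (p 0 - x 0)⁻¹) s := by
      refine ContDiffOn.inv ((h0.sub contDiff_const).contDiffOn) ?_
      intro p hp
      exact sub_ne_zero.2 (ne_of_gt hp)
    exact contDiffOn_const.add
      (((contDiffOn_const.mul hinv).smul ((contDiff_id.sub contDiff_const).contDiffOn)))
  have hsub : {z : E | z 0 = R ∧ (segment ℝ x z ∩ F).Nonempty} ⊆ f '' (F ∩ s) := by
    rintro z ⟨hzR, p, hpseg, hpF⟩
    rw [segment_eq_image' ℝ x z] at hpseg
    obtain ⟨t, ht, rfl⟩ := hpseg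
    have ht0 : t ≠ 0 := by
      rintro rfl
      simp only [zero_smul, add_zero] at hpF
      exact hx hpF
    have htpos : 0 < t := lt_of_le_of_ne ht.1 (Ne.symm ht0)
    have hp0 : (x + t • (z - x)) 0 = x 0 + t * (z 0 - x 0) := by
      simp [PiLp.add_apply, PiLp.smul_apply, PiLp.sub_apply, smul_eq_mul]
    have hps : x + t • (z - x) ∈ s := by
      rw [hs, mem_setOf_eq, hp0]
      have : 0 < t * (z 0 - x 0) := mul_pos htpos (by rw [hzR]; linarith)
      linarith
    refine ⟨x + t • (z - x), ⟨hpF, hps⟩, ?_⟩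
    rw [hf]
    simp only
    rw [add_sub_cancel_left, hp0, hzR]
    have hden : x 0 + t * (R - x 0) - x 0 = t * (R - x 0) := by ring
    have hRx0 : R - x 0 ≠ 0 := by linarith
    have hcoef : (R - x 0) * (t * (R - x 0))⁻¹ = t⁻¹ := by
      rw [mul_inv, ← mul_assoc, mul_comm (R - x 0), mul_assoc, mul_inv_cancel₀ hRx0, mul_one]
    rw [hden, hcoef, smul_smul, inv_mul_cancel₀ ht0, one_smul]
    abel
  calc dimH {z : E | z 0 = R ∧ (segment ℝ x z ∩ F).Nonempty}
      ≤ dimH (f '' (F ∩ s)) := dimH_mono hsub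
    _ ≤ dimH (F ∩ s) := hsmooth.dimH_image_le hconv inter_subset_right
    _ ≤ dimH F := dimH_mono inter_subset_left

/-- The hyperplane `{z : E | z 0 = R}` has Hausdorff dimension `m`. -/
lemma aux_dimH_hyperplane (R : ℝ) (hm : 0 < m) :
    dimH {z : E | z 0 = R} = (m : ENNReal) := by
  set g : EuclideanSpace ℝ (Fin m) → E := fun v => WithLp.toLp 2 (Fin.cons R v : ∀ _ : Fin (m + 1), ℝ)
  have hg : Isometry g := by
    refine Isometry.of_dist_eq fun v w => ?_
    rw [EuclideanSpace.dist_eq, EuclideanSpace.dist_eq]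
    congr 1
    rw [Fin.sum_univ_succ]
    simp [g, Fin.cons_zero, Fin.cons_succ]
  have hrange : g '' univ = {z : E | z 0 = R} := by
    rw [image_univ]
    ext z
    constructor
    · rintro ⟨v, rfl⟩
      exact Fin.cons_zero (α := fun _ : Fin (m + 1) => ℝ) R v.ofLp
    · intro hz
      refine ⟨(WithLp.toLp 2 (fun i : Fin m => z i.succ) : EuclideanSpace ℝ (Fin m)), ?_⟩
      have : (Fin.cons (z 0) (fun i => z i.succ) : ∀ _ : Fin (m + 1), ℝ) = z.ofLp :=
        Fin.cons_self_tail z.ofLp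
      show WithLp.toLp 2 (Fin.cons R fun i => z i.succ : ∀ _ : Fin (m + 1), ℝ) = z
      rw [← hz]
      exact congrArg (WithLp.toLp 2) this
  rw [← hrange, hg.dimH_image]
  rw [Real.dimH_univ_eq_finrank, finrank_euclideanSpace_fin]

end aux

theorem complement_pathConnected_of_dimH_lt (n : ℕ) (hn : 3 ≤ n)
    (F : Set (EuclideanSpace ℝ (Fin n))) (hF : IsClosed F)
    (hdim : dimH F < (n : ENNReal) - 1) :
    IsPathConnected Fᶜ := by
  obtain ⟨m, rfl⟩ : ∃ m, n = m + 1 := ⟨n - 1, by omega⟩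
  have hm : 0 < m := by omega
  have hdim' : dimH F < (m : ENNReal) := by
    have : ((m + 1 : ℕ) : ENNReal) - 1 = (m : ENNReal) := by
      push_cast
      rw [ENNReal.add_sub_cancel_right ENNReal.one_ne_top]
    rwa [this] at hdim
  -- nonempty complement
  have hne : Fᶜ.Nonempty := by
    have hd : Dense Fᶜ := by
      apply dense_compl_of_dimH_lt_finrank
      rw [finrank_euclideanSpace_fin]
      exact hdim'.trans (by exact_mod_cast Nat.cast_lt.2 (Nat.lt_succ_self m))
    exact hd.nonempty
  obtain ⟨x₀, hx₀⟩ := hne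
  refine ⟨x₀, hx₀, fun {y} hy => ?_⟩
  -- join any two points x₀, y in Fᶜ
  set R : ℝ := max (x₀ 0) (y 0) + 1 with hR
  have hRx : x₀ 0 < R := by rw [hR]; have := le_max_left (x₀ 0) (y 0); linarith
  have hRy : y 0 < R := by rw [hR]; have := le_max_right (x₀ 0) (y 0); linarith
  set Bad : Set (EuclideanSpace ℝ (Fin (m + 1))) :=
    {z | z 0 = R ∧ (segment ℝ x₀ z ∩ F).Nonempty} ∪
      {z | z 0 = R ∧ (segment ℝ y z ∩ F).Nonempty} with hBad
  have hBadlt : dimH Bad < (m : ENNReal) := by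
    rw [hBad, dimH_union]
    exact max_lt ((aux_dimH_shadow x₀ F hx₀ R hRx).trans_lt hdim')
      ((aux_dimH_shadow y F hy R hRy).trans_lt hdim')
  have hexists : ∃ z, z 0 = R ∧ z ∉ Bad := by
    by_contra h
    push_neg at h
    have hsub : {z : EuclideanSpace ℝ (Fin (m + 1)) | z 0 = R} ⊆ Bad := fun z hz => h z hz
    have := dimH_mono hsub
    rw [aux_dimH_hyperplane R hm] at this
    exact absurd (this.trans_lt hBadlt) (lt_irrefl _)
  obtain ⟨z, hzR, hzBad⟩ := hexists
  have hseg1 : segment ℝ x₀ z ⊆ Fᶜ := by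
    intro p hp
    by_contra hpF
    rw [notMem_compl_iff] at hpF
    exact hzBad (Or.inl ⟨hzR, p, hp, hpF⟩)
  have hseg2 : segment ℝ y z ⊆ Fᶜ := by
    intro p hp
    by_contra hpF
    rw [notMem_compl_iff] at hpF
    exact hzBad (Or.inr ⟨hzR, p, hp, hpF⟩)
  have j1 : JoinedIn Fᶜ x₀ z :=
    JoinedIn.mono
      (((convex_segment x₀ z).isPathConnected ⟨x₀, left_mem_segment ℝ x₀ z⟩).joinedIn
        x₀ (left_mem_segment ℝ x₀ z) z (right_mem_segment ℝ x₀ z)) hseg1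
  have j2 : JoinedIn Fᶜ y z :=
    JoinedIn.mono
      (((convex_segment y z).isPathConnected ⟨y, left_mem_segment ℝ y z⟩).joinedIn
        y (left_mem_segment ℝ y z) z (right_mem_segment ℝ y z)) hseg2
  exact j1.trans j2.symm
end

section
/- Let F be a closed subset of ℝ^n (n ≥ 3) with (n−1)-dimensional Hausdorff measure zero. Then ℝ^n \ F is path-connected. -/
open MeasureTheory Set Metric Filter
open scoped NNReal ENNReal Topology

variable {X : Type*} [MetricSpace X] [MeasurableSpace X] [BorelSpace X]
  [SecondCountableTopology X]

omit [MeasurableSpace X] [BorelSpace X] [SecondCountableTopology X] in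
lemma ediam_prod_le (s : Set X) (t : Set ℝ) :
    EMetric.diam (s ×ˢ t) ≤ max (EMetric.diam s) (EMetric.diam t) := by
  apply EMetric.diam_le
  rintro ⟨p, u⟩ ⟨hp, hu⟩ ⟨q, v⟩ ⟨hq, hv⟩
  rw [Prod.edist_eq]
  exact max_le_max (EMetric.edist_le_diam_of_mem hp hq)
    (EMetric.edist_le_diam_of_mem hu hv)

lemma hausdorff_prod_null {A : Set X} {d : ℝ} (hd : 0 < d) (hA : μH[d] A = 0) (a b : ℝ) :
    μH[d + 1] (A ×ˢ Icc a b) = 0 := by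
  rcases lt_or_ge b a with hba | hab
  · rw [Set.Icc_eq_empty_of_lt hba, Set.prod_empty, measure_empty]
  set L : ℝ := b - a with hLdef
  have hL : 0 ≤ L := by simp [hLdef]; linarith
  refine le_antisymm ?_ (zero_le)
  refine ENNReal.le_of_forall_pos_le_add fun ε hε _ => ?_
  rw [zero_add]
  set ε₂ : ℝ := ε / (3 * (L + 1)) with hε₂def
  have hε₂ : 0 < ε₂ := by positivity
  have key : ∀ q : ℕ, ∃ P : ℕ × ℕ → Set (X × ℝ),
      (A ×ˢ Icc a b ⊆ ⋃ p, P p) ∧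
      (∀ p, EMetric.diam (P p) ≤ ENNReal.ofReal ((q : ℝ) + 1)⁻¹) ∧
      ∑' p, EMetric.diam (P p) ^ (d + 1) ≤ (ε : ℝ≥0∞) := by
    intro q
    set r : ℝ := ((q : ℝ) + 1)⁻¹ with hrdef
    have hr : 0 < r := by positivity
    have hr1 : r ≤ 1 := by
      rw [hrdef]
      rw [inv_le_one_iff₀]; right; linarith [Nat.cast_nonneg (α := ℝ) q]
    set ε₁ : ℝ := min (r ^ d) ε₂ with hε₁def
    have hε₁ : 0 < ε₁ := lt_min (Real.rpow_pos_of_pos hr d) hε₂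
    -- extract a good cover of A at scale r
    have h0 : (⨅ (t : ℕ → Set X) (_ : A ⊆ ⋃ i, t i)
        (_ : ∀ i, EMetric.diam (t i) ≤ ENNReal.ofReal r),
          ∑' i, ⨆ _ : (t i).Nonempty, EMetric.diam (t i) ^ d) < ENNReal.ofReal ε₁ := by
      have h1 : (⨅ (t : ℕ → Set X) (_ : A ⊆ ⋃ i, t i)
          (_ : ∀ i, EMetric.diam (t i) ≤ ENNReal.ofReal r),
            ∑' i, ⨆ _ : (t i).Nonempty, EMetric.diam (t i) ^ d) ≤ μH[d] A := by
        rw [Measure.hausdorffMeasure_apply]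
        exact le_iSup₂ (f := fun (r' : ℝ≥0∞) (_ : 0 < r') =>
          ⨅ (t : ℕ → Set X) (_ : A ⊆ ⋃ i, t i)
            (_ : ∀ i, EMetric.diam (t i) ≤ r'),
            ∑' i, ⨆ _ : (t i).Nonempty, EMetric.diam (t i) ^ d)
          (ENNReal.ofReal r) (ENNReal.ofReal_pos.mpr hr)
      rw [hA] at h1
      exact lt_of_le_of_lt h1 (ENNReal.ofReal_pos.mpr hε₁)
    simp only [iInf_lt_iff] at h0
    obtain ⟨t, ht_cover, ht_diam, ht_sum⟩ := h0
    have ht_sum' : ∑' i, EMetric.diam (t i) ^ d ≤ ENNReal.ofReal ε₁ := by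
      refine le_of_lt (lt_of_le_of_lt (le_of_eq (tsum_congr fun i => ?_)) ht_sum)
      rcases eq_empty_or_nonempty (t i) with h | h
      · simp [h, EMetric.diam, ENNReal.zero_rpow_of_pos hd]
      · simp [h]
    have ht_diam_ne_top : ∀ i, EMetric.diam (t i) ≠ ⊤ :=
      fun i => (lt_of_le_of_lt (ht_diam i) ENNReal.ofReal_lt_top).ne
    set c : ℕ → ℝ := fun i => (ε₁ * (1 / 2) ^ i) ^ (1 / d) with hcdef
    set δ : ℕ → ℝ := fun i => max (EMetric.diam (t i)).toReal (c i) with hδdef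
    have hc_pos : ∀ i, 0 < c i := fun i => Real.rpow_pos_of_pos (by positivity) _
    have hδ_pos : ∀ i, 0 < δ i := fun i => lt_of_lt_of_le (hc_pos i) (le_max_right _ _)
    have hδ_le_r : ∀ i, δ i ≤ r := by
      intro i
      refine max_le (ENNReal.toReal_le_of_le_ofReal hr.le (ht_diam i)) ?_
      have h1 : ε₁ * (1 / 2) ^ i ≤ r ^ d := by
        calc ε₁ * (1 / 2) ^ i ≤ ε₁ * 1 := by
              refine mul_le_mul_of_nonneg_left ?_ hε₁.le
              exact pow_le_one₀ (by norm_num) (by norm_num)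
        _ = ε₁ := mul_one _
        _ ≤ r ^ d := min_le_left _ _
      calc c i ≤ (r ^ d) ^ (1 / d) :=
            Real.rpow_le_rpow (by positivity) h1 (by positivity)
      _ = r := by
            rw [← Real.rpow_mul hr.le, mul_one_div_cancel hd.ne', Real.rpow_one]
    have hdiam_le : ∀ i, EMetric.diam (t i) ≤ ENNReal.ofReal (δ i) := by
      intro i
      rw [← ENNReal.ofReal_toReal (ht_diam_ne_top i)]
      exact ENNReal.ofReal_le_ofReal (le_max_left _ _)
    have hcd : ∀ i, c i ^ d = ε₁ * (1 / 2) ^ i := by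
      intro i
      rw [hcdef]
      rw [← Real.rpow_mul (by positivity), one_div_mul_cancel hd.ne', Real.rpow_one]
    have hδd : ∀ i, δ i ^ d ≤ (EMetric.diam (t i)).toReal ^ d + ε₁ * (1 / 2) ^ i := by
      intro i
      rcases max_cases (EMetric.diam (t i)).toReal (c i) with ⟨h1, h2⟩ | ⟨h1, h2⟩ <;>
        rw [hδdef] <;> simp only [] <;> rw [h1]
      · have : (0:ℝ) ≤ ε₁ * (1 / 2) ^ i := by positivity
        linarith
      · rw [hcd i]
        have : (0:ℝ) ≤ (EMetric.diam (t i)).toReal ^ d :=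
          Real.rpow_nonneg ENNReal.toReal_nonneg d
        linarith
    set M : ℕ → ℕ := fun i => ⌊L / δ i⌋₊ + 1 with hMdef
    set P : ℕ × ℕ → Set (X × ℝ) := fun p =>
      if p.2 < M p.1 then (t p.1) ×ˢ Icc (a + p.2 * δ p.1) (a + (p.2 + 1) * δ p.1) else ∅
      with hPdef
    have hPdiam : ∀ i m, m < M i → EMetric.diam (P (i, m)) ≤ ENNReal.ofReal (δ i) := by
      intro i m hm
      rw [hPdef]
      simp only [if_pos hm]
      refine le_trans (ediam_prod_le _ _) (max_le (hdiam_le i) ?_)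
      rw [EMetric.diam, Real.ediam_Icc]
      refine ENNReal.ofReal_le_ofReal ?_
      ring_nf
      exact le_refl _
    refine ⟨P, ?_, ?_, ?_⟩
    · -- covering
      rintro ⟨p, u⟩ ⟨hp, hu⟩
      obtain ⟨i, hi⟩ := mem_iUnion.mp (ht_cover hp)
      have hu1 : a ≤ u := hu.1
      have hu2 : u ≤ b := hu.2
      set m := ⌊(u - a) / δ i⌋₊ with hmdef
      have hm : m < M i := by
        have h1 : (u - a) / δ i ≤ L / δ i := by
          gcongr
          linarith
        exact Nat.lt_succ_of_le (Nat.floor_le_floor h1)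
      refine mem_iUnion.mpr ⟨(i, m), ?_⟩
      rw [hPdef]
      simp only [if_pos hm]
      refine ⟨hi, ?_, ?_⟩
      · have h2 : (m : ℝ) * δ i ≤ u - a := by
          rw [← le_div_iff₀ (hδ_pos i)]
          exact Nat.floor_le (div_nonneg (by linarith) (hδ_pos i).le)
        simpa using by linarith
      · have h3 : u - a < ((m : ℝ) + 1) * δ i := by
          rw [← div_lt_iff₀ (hδ_pos i)]
          exact Nat.lt_floor_add_one _
        simpa using by linarith
    · rintro ⟨i, m⟩
      by_cases hm : m < M i
      · exact le_trans (hPdiam i m hm) (ENNReal.ofReal_le_ofReal (hδ_le_r i))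
      · rw [hPdef]
        simp [if_neg hm, EMetric.diam]
    · have hterm : ∀ i, (M i : ℝ≥0∞) * ENNReal.ofReal (δ i) ^ (d + 1)
          ≤ ENNReal.ofReal ((L + 1) * ((EMetric.diam (t i)).toReal ^ d + ε₁ * (1/2) ^ i)) := by
        intro i
        have h1 : ENNReal.ofReal (δ i) ^ (d + 1) = ENNReal.ofReal (δ i ^ (d + 1)) :=
          ENNReal.ofReal_rpow_of_nonneg (hδ_pos i).le (by linarith)
        have h2 : ((M i : ℕ) : ℝ≥0∞) = ENNReal.ofReal (M i : ℝ) := (ENNReal.ofReal_natCast _).symm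
        rw [h1, h2, ← ENNReal.ofReal_mul (Nat.cast_nonneg _)]
        refine ENNReal.ofReal_le_ofReal ?_
        have hM : (M i : ℝ) ≤ L / δ i + 1 := by
          rw [hMdef]
          push_cast
          linarith [Nat.floor_le (div_nonneg hL (hδ_pos i).le)]
        have hpow : δ i ^ (d + 1) = δ i ^ d * δ i := by
          rw [Real.rpow_add (hδ_pos i), Real.rpow_one]
        have hδd_nonneg : 0 ≤ δ i ^ d := Real.rpow_nonneg (hδ_pos i).le d
        have hstep : (M i : ℝ) * δ i ^ (d + 1) ≤ (L + 1) * δ i ^ d := by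
          rw [hpow]
          have hδr : δ i ≤ 1 := le_trans (hδ_le_r i) hr1
          have hδp := hδ_pos i
          calc (M i : ℝ) * (δ i ^ d * δ i) ≤ (L / δ i + 1) * (δ i ^ d * δ i) := by
                refine mul_le_mul_of_nonneg_right hM (by positivity)
            _ = (L + δ i) * δ i ^ d := by field_simp
            _ ≤ (L + 1) * δ i ^ d := by nlinarith
        refine le_trans hstep (mul_le_mul_of_nonneg_left (hδd i) (by linarith))
      have hsum_i : ∀ i, ∑' m : ℕ, EMetric.diam (P (i, m)) ^ (d + 1)
          ≤ (M i : ℝ≥0∞) * ENNReal.ofReal (δ i) ^ (d + 1) := by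
        intro i
        have hzero : ∀ m ∉ Finset.range (M i), EMetric.diam (P (i, m)) ^ (d + 1) = 0 := by
          intro m hm
          rw [Finset.mem_range, not_lt] at hm
          rw [hPdef]
          simp only [not_lt.mpr hm, if_neg (Nat.not_lt.mpr hm)]
          simp [EMetric.diam, ENNReal.zero_rpow_of_pos (by linarith : (0:ℝ) < d + 1)]
        rw [tsum_eq_sum hzero]
        refine le_trans (Finset.sum_le_card_nsmul _ _ (ENNReal.ofReal (δ i) ^ (d + 1)) ?_) ?_
        · intro m hm
          rw [Finset.mem_range] at hm
          exact ENNReal.rpow_le_rpow (hPdiam i m hm) (by linarith)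
        · rw [Finset.card_range, nsmul_eq_mul]
      have hA1 : ∑' i, ENNReal.ofReal ((EMetric.diam (t i)).toReal ^ d)
          = ∑' i, EMetric.diam (t i) ^ d := by
        refine tsum_congr fun i => ?_
        rw [← ENNReal.ofReal_rpow_of_nonneg ENNReal.toReal_nonneg hd.le,
          ENNReal.ofReal_toReal (ht_diam_ne_top i)]
      have hA2 : ∑' i : ℕ, ENNReal.ofReal ((1/2 : ℝ) ^ i) = ENNReal.ofReal 2 := by
        rw [← ENNReal.ofReal_tsum_of_nonneg (fun i => by positivity)
          (summable_geometric_of_lt_one (by norm_num) (by norm_num))]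
        congr 1
        rw [tsum_geometric_of_lt_one (by norm_num) (by norm_num)]
        norm_num
      calc ∑' p : ℕ × ℕ, EMetric.diam (P p) ^ (d + 1)
          = ∑' i : ℕ, ∑' m : ℕ, EMetric.diam (P (i, m)) ^ (d + 1) := ENNReal.tsum_prod (f := fun i m => EMetric.diam (P (i, m)) ^ (d + 1))
        _ ≤ ∑' i : ℕ, (M i : ℝ≥0∞) * ENNReal.ofReal (δ i) ^ (d + 1) :=
            ENNReal.tsum_le_tsum hsum_i
        _ ≤ ∑' i : ℕ, ENNReal.ofReal ((L + 1) * ((EMetric.diam (t i)).toReal ^ d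
              + ε₁ * (1/2) ^ i)) := ENNReal.tsum_le_tsum hterm
        _ = ENNReal.ofReal (L + 1) * ∑' i : ℕ, (ENNReal.ofReal ((EMetric.diam (t i)).toReal ^ d)
              + ENNReal.ofReal ε₁ * ENNReal.ofReal ((1/2 : ℝ) ^ i)) := by
            rw [← ENNReal.tsum_mul_left]
            refine tsum_congr fun i => ?_
            rw [ENNReal.ofReal_mul (by linarith), ENNReal.ofReal_add
              (Real.rpow_nonneg ENNReal.toReal_nonneg d) (by positivity),
              ENNReal.ofReal_mul hε₁.le]
        _ = ENNReal.ofReal (L + 1) * ((∑' i, ENNReal.ofReal ((EMetric.diam (t i)).toReal ^ d))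
              + ENNReal.ofReal ε₁ * ∑' i : ℕ, ENNReal.ofReal ((1/2 : ℝ) ^ i)) := by
            rw [ENNReal.tsum_add, ENNReal.tsum_mul_left]
        _ ≤ ENNReal.ofReal (L + 1) * (ENNReal.ofReal ε₁ + ENNReal.ofReal ε₁ * ENNReal.ofReal 2) := by
            rw [hA1, hA2]
            gcongr
        _ = ENNReal.ofReal ((L + 1) * (3 * ε₁)) := by
            rw [← ENNReal.ofReal_mul hε₁.le, ← ENNReal.ofReal_add hε₁.le (by positivity),
              ← ENNReal.ofReal_mul (by linarith)]
            congr 1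
            ring
        _ ≤ ENNReal.ofReal ((L + 1) * (3 * ε₂)) := by
            refine ENNReal.ofReal_le_ofReal ?_
            have h1 : ε₁ ≤ ε₂ := min_le_right _ _
            nlinarith
        _ = ENNReal.ofReal (ε : ℝ) := by
            rw [hε₂def]
            congr 1
            field_simp
        _ = (ε : ℝ≥0∞) := ENNReal.ofReal_coe_nnreal
  choose P hP1 hP2 hP3 using key
  have htend : Tendsto (fun q : ℕ => ENNReal.ofReal ((q : ℝ) + 1)⁻¹) atTop (𝓝 0) := by
    have h := tendsto_one_div_add_atTop_nhds_zero_nat (𝕜 := ℝ)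
    simpa [one_div] using ENNReal.tendsto_ofReal h
  have hle := Measure.hausdorffMeasure_le_liminf_tsum (d + 1) (A ×ˢ Icc a b)
    (fun q : ℕ => ENNReal.ofReal ((q : ℝ) + 1)⁻¹) htend P
    (Eventually.of_forall hP2) (Eventually.of_forall hP1)
  refine le_trans hle (le_trans (Filter.liminf_le_liminf (Eventually.of_forall hP3)) ?_)
  simp

lemma volume_null_of_hausdorff_null {n : ℕ} {s : Set (EuclideanSpace ℝ (Fin n))}
    (h : μH[(n : ℝ)] s = 0) : volume s = 0 := by
  set e := (MeasurableEquiv.toLp 2 (Fin n → ℝ)).symm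
  have hlip : LipschitzWith 1 (⇑e) := by
    have := PiLp.lipschitzWith_ofLp 2 (fun _ : Fin n => ℝ)
    exact this
  have h1 : μH[(n : ℝ)] (⇑e '' s) = 0 := by
    refine le_antisymm ?_ (zero_le)
    calc μH[(n : ℝ)] (⇑e '' s) ≤ (1 : ℝ≥0) ^ (n : ℝ) * μH[(n : ℝ)] s :=
        hlip.hausdorffMeasure_image_le (by positivity) s
    _ = 0 := by rw [h, mul_zero]
  have h2 : volume (⇑e '' s) = 0 := by
    have hpi := hausdorffMeasure_pi_real (ι := Fin n)
    rw [Fintype.card_fin] at hpi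
    rw [← hpi]
    exact h1
  have h3 := (EuclideanSpace.volume_preserving_symm_measurableEquiv_toLp (Fin n)).quasiMeasurePreserving
  have hsub : s ⊆ ⇑e ⁻¹' (⇑e '' s) := subset_preimage_image _ _
  exact le_antisymm (le_trans (measure_mono hsub) (le_of_eq (h3.preimage_null h2))) (zero_le)

theorem complement_pathConnected_of_hausdorffMeasure_zero (n : ℕ) (hn : 3 ≤ n)
    (F : Set (EuclideanSpace ℝ (Fin n))) (hF : IsClosed F)
    (hmeas : μH[((n : ℝ) - 1)] F = 0) :
    IsPathConnected Fᶜ := by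
  have hn3 : (3 : ℝ) ≤ (n : ℝ) := by exact_mod_cast hn
  have hd : (0 : ℝ) < (n : ℝ) - 1 := by linarith
  -- F is volume-null
  have hFn : μH[(n : ℝ)] F = 0 := by
    refine le_antisymm ?_ (zero_le)
    refine le_trans (Measure.hausdorffMeasure_mono (by linarith) F) (le_of_eq hmeas)
  have hvolF : volume F = 0 := volume_null_of_hausdorff_null hFn
  -- the "bad cone" from a point
  set Bad : EuclideanSpace ℝ (Fin n) → Set (EuclideanSpace ℝ (Fin n)) :=
    fun x => {z | ∃ f ∈ F, ∃ s : ℝ, 1 ≤ s ∧ z = x + s • (f - x)} with hBadDef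
  have hBadNull : ∀ x, volume (Bad x) = 0 := by
    intro x
    set φ : EuclideanSpace ℝ (Fin n) × ℝ → EuclideanSpace ℝ (Fin n) :=
      fun p => x + p.2 • (p.1 - x) with hφdef
    have hsub : Bad x ⊆ ⋃ m : ℕ,
        φ '' ((F ∩ closedBall x ((m : ℝ) + 1)) ×ˢ Icc (1 : ℝ) ((m : ℝ) + 1)) := by
      rintro z ⟨f, hf, s, hs, rfl⟩
      have h1 : dist f x ≤ (⌈dist f x⌉₊ : ℝ) := Nat.le_ceil _
      have h2 : s ≤ (⌈s⌉₊ : ℝ) := Nat.le_ceil _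
      set m : ℕ := max ⌈dist f x⌉₊ ⌈s⌉₊ with hmdef
      refine mem_iUnion.mpr ⟨m, ⟨(f, s), ⟨⟨hf, ?_⟩, ?_, ?_⟩, rfl⟩⟩
      · rw [mem_closedBall]
        have : (⌈dist f x⌉₊ : ℝ) ≤ (m : ℝ) := by exact_mod_cast Nat.cast_le.mpr (le_max_left _ _)
        linarith
      · exact hs
      · have : (⌈s⌉₊ : ℝ) ≤ (m : ℝ) := by exact_mod_cast Nat.cast_le.mpr (le_max_right _ _)
        linarith
    refine le_antisymm (le_trans (measure_mono hsub) (le_of_eq ?_)) (zero_le)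
    refine measure_iUnion_null fun m => ?_
    -- the restricted map is Lipschitz
    set K : ℝ≥0 := 2 * ((m : ℝ≥0) + 1) with hKdef
    have hlip : LipschitzOnWith K φ
        ((F ∩ closedBall x ((m : ℝ) + 1)) ×ˢ Icc (1 : ℝ) ((m : ℝ) + 1)) := by
      rw [lipschitzOnWith_iff_dist_le_mul]
      rintro ⟨f, s⟩ ⟨⟨-, hfb⟩, hs⟩ ⟨g, u⟩ ⟨⟨-, hgb⟩, hu⟩
      rw [Prod.dist_eq]
      have hb1 : ‖g - x‖ ≤ (m : ℝ) + 1 := by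
        rw [← dist_eq_norm]; exact mem_closedBall.mp hgb
      have hs1 : |s| ≤ (m : ℝ) + 1 := by
        rw [abs_le]; constructor <;> [linarith [hs.1]; exact hs.2]
      have key : dist (φ (f, s)) (φ (g, u)) ≤ ((m : ℝ) + 1) * dist f g + ((m : ℝ) + 1) * dist s u := by
        have hrw : φ (f, s) - φ (g, u) = s • (f - g) + (s - u) • (g - x) := by
          show x + s • (f - x) - (x + u • (g - x)) = s • (f - g) + (s - u) • (g - x)
          module
        rw [dist_eq_norm, hrw]
        calc ‖s • (f - g) + (s - u) • (g - x)‖ ≤ ‖s • (f - g)‖ + ‖(s - u) • (g - x)‖ :=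
              norm_add_le _ _
          _ = |s| * ‖f - g‖ + |s - u| * ‖g - x‖ := by
              rw [norm_smul, norm_smul, Real.norm_eq_abs, Real.norm_eq_abs]
          _ ≤ ((m : ℝ) + 1) * ‖f - g‖ + |s - u| * ((m : ℝ) + 1) := by
              have h1 : (0:ℝ) ≤ ‖f - g‖ := norm_nonneg _
              have h2 : (0:ℝ) ≤ |s - u| := abs_nonneg _
              have h3 : |s| * ‖f - g‖ ≤ ((m : ℝ) + 1) * ‖f - g‖ :=
                mul_le_mul_of_nonneg_right hs1 h1
              have h4 : |s - u| * ‖g - x‖ ≤ |s - u| * ((m : ℝ) + 1) :=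
                mul_le_mul_of_nonneg_left hb1 h2
              linarith
          _ = ((m : ℝ) + 1) * dist f g + ((m : ℝ) + 1) * dist s u := by
              rw [dist_eq_norm, Real.dist_eq]; ring
      have hK : (K : ℝ) = 2 * ((m : ℝ) + 1) := by rw [hKdef]; push_cast; ring
      rw [hK]
      have h5 : dist f g ≤ max (dist f g) (dist s u) := le_max_left _ _
      have h6 : dist s u ≤ max (dist f g) (dist s u) := le_max_right _ _
      have h7 : (0:ℝ) ≤ (m : ℝ) + 1 := by positivity
      calc dist (φ (f, s)) (φ (g, u)) ≤ ((m : ℝ) + 1) * dist f g + ((m : ℝ) + 1) * dist s u := key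
        _ ≤ 2 * ((m : ℝ) + 1) * max (dist f g) (dist s u) := by nlinarith
    have hprod : μH[(n : ℝ)]
        ((F ∩ closedBall x ((m : ℝ) + 1)) ×ˢ Icc (1 : ℝ) ((m : ℝ) + 1)) = 0 := by
      have hAnull : μH[((n : ℝ) - 1)] (F ∩ closedBall x ((m : ℝ) + 1)) = 0 :=
        le_antisymm (le_trans (measure_mono inter_subset_left) (le_of_eq hmeas)) (zero_le)
      have h := hausdorff_prod_null hd hAnull 1 ((m : ℝ) + 1)
      rwa [sub_add_cancel] at h
    have himg : μH[(n : ℝ)]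
        (φ '' ((F ∩ closedBall x ((m : ℝ) + 1)) ×ˢ Icc (1 : ℝ) ((m : ℝ) + 1))) = 0 := by
      refine le_antisymm (le_trans (hlip.hausdorffMeasure_image_le (by positivity)) ?_) (zero_le)
      rw [hprod, mul_zero]
    exact volume_null_of_hausdorff_null himg
  -- segments to points outside the bad cone avoid F
  have hseg : ∀ x, x ∉ F → ∀ z, z ∉ Bad x → segment ℝ x z ⊆ Fᶜ := by
    intro x hx z hz p hp
    rw [segment_eq_image'] at hp
    obtain ⟨θ, hθ, rfl⟩ := hp
    intro hpF
    have hθ0 : θ ≠ 0 := by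
      rintro rfl
      simp only [zero_smul, add_zero] at hpF
      exact hx hpF
    have hθpos : 0 < θ := lt_of_le_of_ne hθ.1 (Ne.symm hθ0)
    apply hz
    refine ⟨_, hpF, 1 / θ, one_le_one_div hθpos hθ.2, ?_⟩
    rw [add_sub_cancel_left, smul_smul, one_div_mul_cancel hθ0, one_smul]
    abel
  have joined : ∀ x z : EuclideanSpace ℝ (Fin n), segment ℝ x z ⊆ Fᶜ → JoinedIn Fᶜ x z := by
    intro x z hs
    refine JoinedIn.ofLine (f := fun θ : ℝ => x + θ • (z - x)) ?_ (by simp) (by simp) ?_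
    · exact (continuous_const.add (continuous_id.smul continuous_const)).continuousOn
    rw [← segment_eq_image']
    exact hs
  -- choosing points outside null sets
  have hpick : ∀ N : Set (EuclideanSpace ℝ (Fin n)), volume N = 0 → Nᶜ.Nonempty := by
    intro N hN
    rcases eq_empty_or_nonempty Nᶜ with h | h
    · exfalso
      have huniv : (univ : Set (EuclideanSpace ℝ (Fin n))) ⊆ N := by
        intro w _
        by_contra hw
        exact (eq_empty_iff_forall_notMem.mp h) w hw
      have h1 : volume (univ : Set (EuclideanSpace ℝ (Fin n))) = 0 :=
        le_antisymm (le_trans (measure_mono huniv) (le_of_eq hN)) (zero_le)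
      have h2 : (0:ℝ≥0∞) < volume (Metric.ball (0 : EuclideanSpace ℝ (Fin n)) 1) :=
        Metric.measure_ball_pos volume 0 one_pos
      exact absurd (le_antisymm (le_trans (measure_mono (subset_univ _)) (le_of_eq h1))
        (zero_le)) h2.ne'
    · exact h
  obtain ⟨x₀, hx₀⟩ := hpick F hvolF
  refine ⟨x₀, hx₀, ?_⟩
  intro y hy
  have hnull : volume (Bad x₀ ∪ Bad y ∪ F) = 0 := by
    refine le_antisymm (le_trans (measure_union_le _ _) ?_) (zero_le)
    rw [hvolF, add_zero]
    refine le_trans (measure_union_le _ _) ?_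
    rw [hBadNull x₀, hBadNull y, add_zero]
  obtain ⟨z, hz⟩ := hpick _ hnull
  simp only [compl_union, mem_inter_iff, mem_compl_iff] at hz
  have h1 : JoinedIn Fᶜ x₀ z := joined x₀ z (hseg x₀ hx₀ z hz.1.1)
  have h2 : JoinedIn Fᶜ y z := joined y z (hseg y hy z hz.1.2)
  exact h1.trans h2.symm
end
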